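/- Let K be a nonempty set of permutations of ℕ such that for every n ∈ ℕ both sets {q(n) : q ∈ K} and {q⁻¹(n) : q ∈ K} are finite. Then there exists a permutation p of ℕ such that for every q ∈ K the permutation p ∘ q has an infinite cycle, i.e., there exists m ∈ ℕ whose orbit {(p ∘ q)^k (m) : k ∈ ℕ} is infinite. -/
import Mathlib

namespace ExistsPermCompAux

/-- State of the construction. -/
structure St where
  f : ℕ → ℕ
  D : Finset ℕ
  A : Finset ℕ

variable (K : Set (Equiv.Perm ℕ))
  (hproj : ∀ n : ℕ, ((fun q : Equiv.Perm ℕ => q n) '' K).Finite)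

/-- All images of current orbit positions under permutations in `K`. -/
noncomputable def Bset (s : St) : Finset ℕ := s.A.biUnion fun a => (hproj a).toFinset

/-- A fresh natural number, not in `s.D ∪ Bset s ∪ {k}`. -/
noncomputable def xpt (k : ℕ) (s : St) : ℕ := ((s.D ∪ Bset K hproj s) ∪ {k}).sup id + 1

/-- The new domain. -/
noncomputable def Dnew (k : ℕ) (s : St) : Finset ℕ :=
  (s.D ∪ Bset K hproj s) ∪ {k, xpt K hproj k s}

/-- Least value outside the current range. -/
noncomputable def rval (s : St) : ℕ := sInf {n | n ∉ s.D.image s.f}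

/-- The set of "bad" candidate values. -/
noncomputable def bad (k : ℕ) (s : St) : Set ℕ :=
  {a | a ≤ k} ∪ ↑(Dnew K hproj k s) ∪ ↑(s.D.image s.f) ∪ {rval s} ∪
    {a | ∃ q ∈ K, q a ∈ Dnew K hproj k s}

noncomputable def good (k : ℕ) (s : St) : ℕ → Prop := fun n => n ∉ bad K hproj k s

noncomputable def wv (k : ℕ) (s : St) : ℕ := Nat.nth (good K hproj k s) 0
noncomputable def vv (k : ℕ) (s : St) (b : ℕ) : ℕ := Nat.nth (good K hproj k s) (b + 1)

open Classical in
noncomputable def fnew (k : ℕ) (s : St) : ℕ → ℕ := fun n =>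
  if n ∈ Bset K hproj s then vv K hproj k s n
  else if n = k ∧ k ∉ s.D then wv K hproj k s
  else if n = xpt K hproj k s then rval s
  else s.f n

noncomputable def step (k : ℕ) (s : St) : St :=
  ⟨fnew K hproj k s, Dnew K hproj k s, (Bset K hproj s).image (vv K hproj k s)⟩

noncomputable def S : ℕ → St
  | 0 => ⟨id, ∅, {0}⟩
  | (k+1) => step K hproj k (S k)

lemma S_succ (k : ℕ) : S K hproj (k+1) = step K hproj k (S K hproj k) := rfl

lemma finite_preimages
    (hproj' : ∀ n : ℕ, ((fun q : Equiv.Perm ℕ => q.symm n) '' K).Finite)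
    (T : Finset ℕ) : {a : ℕ | ∃ q ∈ K, q a ∈ T}.Finite := by
  have h : {a : ℕ | ∃ q ∈ K, q a ∈ T} ⊆
      ⋃ t ∈ T, ((fun q : Equiv.Perm ℕ => q.symm t) '' K) := by
    rintro a ⟨q, hq, hqa⟩
    exact Set.mem_biUnion hqa ⟨q, hq, by simp⟩
  exact (Set.Finite.biUnion T.finite_toSet fun t _ => hproj' t).subset h

lemma bad_finite
    (hproj' : ∀ n : ℕ, ((fun q : Equiv.Perm ℕ => q.symm n) '' K).Finite)
    (k : ℕ) (s : St) : (bad K hproj k s).Finite := by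
  unfold bad
  exact (((((Set.finite_le_nat k).union (Dnew K hproj k s).finite_toSet).union
    (s.D.image s.f).finite_toSet).union (Set.finite_singleton _)).union
    (finite_preimages K hproj' (Dnew K hproj k s)))

lemma good_infinite
    (hproj' : ∀ n : ℕ, ((fun q : Equiv.Perm ℕ => q.symm n) '' K).Finite)
    (k : ℕ) (s : St) : (setOf (good K hproj k s)).Infinite :=
  (bad_finite K hproj hproj' k s).infinite_compl

lemma good_nth
    (hproj' : ∀ n : ℕ, ((fun q : Equiv.Perm ℕ => q.symm n) '' K).Finite)
    (k : ℕ) (s : St) (i : ℕ) : good K hproj k s (Nat.nth (good K hproj k s) i) :=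
  Nat.nth_mem_of_infinite (good_infinite K hproj hproj' k s) i

lemma nth_inj
    (hproj' : ∀ n : ℕ, ((fun q : Equiv.Perm ℕ => q.symm n) '' K).Finite)
    (k : ℕ) (s : St) : Function.Injective (Nat.nth (good K hproj k s)) :=
  Nat.nth_injective (good_infinite K hproj hproj' k s)

lemma good_spec {k : ℕ} {s : St} {n : ℕ} (h : good K hproj k s n) :
    k < n ∧ n ∉ Dnew K hproj k s ∧ n ∉ s.D.image s.f ∧ n ≠ rval s ∧
      ∀ q ∈ K, q n ∉ Dnew K hproj k s := by
  unfold good bad at h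
  simp only [Set.mem_union, Set.mem_setOf_eq, Finset.coe_image, Set.mem_image,
    Finset.mem_coe, Set.mem_singleton_iff, not_or, not_exists, not_and, not_le] at h
  obtain ⟨⟨⟨⟨h1, h2⟩, h3⟩, h4⟩, h5⟩ := h
  refine ⟨h1, h2, ?_, h4, fun q hq => h5 q hq⟩
  intro hmem
  obtain ⟨a, ha, hfa⟩ := Finset.mem_image.mp hmem
  exact h3 a ha hfa

lemma xpt_spec (k : ℕ) (s : St) :
    xpt K hproj k s ∉ s.D ∧ xpt K hproj k s ∉ Bset K hproj s ∧ k < xpt K hproj k s := by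
  have hsup : ∀ n ∈ (s.D ∪ Bset K hproj s) ∪ {k}, n < xpt K hproj k s := by
    intro n hn
    have := Finset.le_sup (f := id) hn
    simp only [id] at this
    simp only [xpt]
    omega
  refine ⟨fun h => ?_, fun h => ?_, ?_⟩
  · exact absurd (hsup _ (by simp [h])) (lt_irrefl _)
  · exact absurd (hsup _ (by simp [h])) (lt_irrefl _)
  · exact hsup k (by simp)

lemma rval_not_mem (s : St) : rval s ∉ s.D.image s.f := by
  have hne : {n | n ∉ s.D.image s.f}.Nonempty :=
    ((s.D.image s.f).finite_toSet.infinite_compl).nonempty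
  exact Nat.sInf_mem hne

lemma invA
    (hproj' : ∀ n : ℕ, ((fun q : Equiv.Perm ℕ => q.symm n) '' K).Finite) :
    ∀ k, ∀ a ∈ (S K hproj k).A, ∀ q ∈ K, q a ∉ (S K hproj k).D := by
  intro k
  cases k with
  | zero => intro a _ q _ h; simp [S] at h
  | succ k =>
    intro a ha q hq
    rw [S_succ] at ha ⊢
    simp only [step] at ha ⊢
    obtain ⟨b, _, rfl⟩ := Finset.mem_image.mp ha
    exact (good_spec K hproj (good_nth K hproj hproj' k (S K hproj k) (b+1))).2.2.2.2 q hq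

lemma invLB
    (hproj' : ∀ n : ℕ, ((fun q : Equiv.Perm ℕ => q.symm n) '' K).Finite) :
    ∀ k, ∀ a ∈ (S K hproj k).A, k ≤ a := by
  intro k
  cases k with
  | zero => intro a _; omega
  | succ k =>
    intro a ha
    rw [S_succ] at ha
    simp only [step] at ha
    obtain ⟨b, _, rfl⟩ := Finset.mem_image.mp ha
    exact (good_spec K hproj (good_nth K hproj hproj' k (S K hproj k) (b+1))).1

lemma B_disj
    (hproj' : ∀ n : ℕ, ((fun q : Equiv.Perm ℕ => q.symm n) '' K).Finite)
    (k : ℕ) : ∀ b ∈ Bset K hproj (S K hproj k), b ∉ (S K hproj k).D := by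
  intro b hb
  obtain ⟨a, ha, hbmem⟩ := Finset.mem_biUnion.mp hb
  obtain ⟨q, hq, rfl⟩ := (Set.Finite.mem_toFinset _).mp hbmem
  exact invA K hproj hproj' k a ha q hq

lemma mem_Dnew_of_B {k : ℕ} {s : St} {n : ℕ} (h : n ∈ Bset K hproj s) :
    n ∈ Dnew K hproj k s := by
  simp only [Dnew, Finset.mem_union]
  exact Or.inl (Or.inr h)

lemma k_mem_Dnew (k : ℕ) (s : St) : k ∈ Dnew K hproj k s := by
  simp [Dnew]

lemma xpt_mem_Dnew (k : ℕ) (s : St) : xpt K hproj k s ∈ Dnew K hproj k s := by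
  simp [Dnew]

lemma fnew_of_B {k : ℕ} {s : St} {n : ℕ} (h : n ∈ Bset K hproj s) :
    fnew K hproj k s n = vv K hproj k s n := by
  simp [fnew, h]

lemma fnew_of_old {k : ℕ} {s : St} {n : ℕ} (hB : n ∉ Bset K hproj s) (hD : n ∈ s.D) :
    fnew K hproj k s n = s.f n := by
  rw [fnew, if_neg hB, if_neg (by rintro ⟨rfl, h2⟩; exact h2 hD),
    if_neg (by rintro rfl; exact (xpt_spec K hproj k s).1 hD)]

lemma fnew_of_k {k : ℕ} {s : St} (hB : k ∉ Bset K hproj s) (hD : k ∉ s.D) :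
    fnew K hproj k s k = wv K hproj k s := by
  rw [fnew, if_neg hB, if_pos ⟨rfl, hD⟩]

lemma fnew_of_xpt {k : ℕ} {s : St} :
    fnew K hproj k s (xpt K hproj k s) = rval s := by
  rw [fnew, if_neg (xpt_spec K hproj k s).2.1,
    if_neg (by rintro ⟨h1, _⟩; exact absurd h1 (by have := (xpt_spec K hproj k s).2.2; omega)),
    if_pos rfl]

/-- Classification of new domain points and their values. -/
lemma classify {k : ℕ} {n : ℕ} (hn : n ∈ (S K hproj (k+1)).D) :
    (n ∈ (S K hproj k).D ∧ (S K hproj (k+1)).f n = (S K hproj k).f n) ∨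
    (n ∈ Bset K hproj (S K hproj k) ∧
      (S K hproj (k+1)).f n = vv K hproj k (S K hproj k) n) ∨
    (n = k ∧ k ∉ (S K hproj k).D ∧ k ∉ Bset K hproj (S K hproj k) ∧
      (S K hproj (k+1)).f n = wv K hproj k (S K hproj k)) ∨
    (n = xpt K hproj k (S K hproj k) ∧ (S K hproj (k+1)).f n = rval (S K hproj k)) := by
  set s := S K hproj k with hs
  have hfn : (S K hproj (k+1)).f = fnew K hproj k s := rfl
  by_cases hB : n ∈ Bset K hproj s
  · exact Or.inr (Or.inl ⟨hB, by rw [hfn, fnew_of_B K hproj hB]⟩)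
  by_cases hD : n ∈ s.D
  · exact Or.inl ⟨hD, by rw [hfn, fnew_of_old K hproj hB hD]⟩
  have hn' : n ∈ Dnew K hproj k s := hn
  simp only [Dnew, Finset.mem_union, Finset.mem_insert, Finset.mem_singleton] at hn'
  rcases hn' with (h | h) | (rfl | rfl)
  · exact absurd h hD
  · exact absurd h hB
  · exact Or.inr (Or.inr (Or.inl ⟨rfl, hD, hB, by rw [hfn, fnew_of_k K hproj hB hD]⟩))
  · exact Or.inr (Or.inr (Or.inr ⟨rfl, by rw [hfn]; exact fnew_of_xpt K hproj⟩))

lemma invInj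
    (hproj' : ∀ n : ℕ, ((fun q : Equiv.Perm ℕ => q.symm n) '' K).Finite) :
    ∀ k, Set.InjOn (S K hproj k).f ↑(S K hproj k).D := by
  intro k
  induction k with
  | zero => simp [S]
  | succ k ih =>
    intro m hm n hn heq
    set s := S K hproj k with hs
    have hvgood : ∀ b, good K hproj k s (vv K hproj k s b) :=
      fun b => good_nth K hproj hproj' k s (b+1)
    have hwgood : good K hproj k s (wv K hproj k s) := good_nth K hproj hproj' k s 0
    have hvinj : ∀ b b', vv K hproj k s b = vv K hproj k s b' → b = b' := by
      intro b b' h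
      have := nth_inj K hproj hproj' k s h
      omega
    have hvw : ∀ b, vv K hproj k s b ≠ wv K hproj k s := by
      intro b h
      have := nth_inj K hproj hproj' k s h
      omega
    have hr : rval s ∉ s.D.image s.f := rval_not_mem s
    rcases classify K hproj (Finset.mem_coe.mp hm) with
      ⟨hm1, hm2⟩ | ⟨hm1, hm2⟩ | ⟨hm1, hmD, hmB, hm2⟩ | ⟨hm1, hm2⟩ <;>
      rcases classify K hproj (Finset.mem_coe.mp hn) with
        ⟨hn1, hn2⟩ | ⟨hn1, hn2⟩ | ⟨hn1, hnD, hnB, hn2⟩ | ⟨hn1, hn2⟩ <;>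
      rw [hm2, hn2] at heq
    · exact ih (Finset.mem_coe.mpr hm1) (Finset.mem_coe.mpr hn1) heq
    · exact absurd (heq ▸ Finset.mem_image_of_mem s.f hm1)
        (good_spec K hproj (hvgood n)).2.2.1
    · exact absurd (heq ▸ Finset.mem_image_of_mem s.f hm1) (good_spec K hproj hwgood).2.2.1
    · exact absurd (heq ▸ Finset.mem_image_of_mem s.f hm1) hr
    · exact absurd (heq.symm ▸ Finset.mem_image_of_mem s.f hn1)
        (good_spec K hproj (hvgood m)).2.2.1
    · exact hvinj m n heq
    · exact absurd heq (hvw m)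
    · exact absurd heq (good_spec K hproj (hvgood m)).2.2.2.1
    · exact absurd (heq.symm ▸ Finset.mem_image_of_mem s.f hn1)
        (good_spec K hproj hwgood).2.2.1
    · exact absurd heq.symm (hvw n)
    · omega
    · exact absurd heq (good_spec K hproj hwgood).2.2.2.1
    · exact absurd (heq.symm ▸ Finset.mem_image_of_mem s.f hn1) hr
    · exact absurd heq.symm (good_spec K hproj (hvgood n)).2.2.2.1
    · exact absurd heq.symm (good_spec K hproj hwgood).2.2.2.1
    · omega

lemma D_sub (k : ℕ) : (S K hproj k).D ⊆ (S K hproj (k+1)).D := by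
  intro n hn
  simp only [S_succ, step, Dnew, Finset.mem_union]
  exact Or.inl (Or.inl hn)

lemma D_mono : ∀ {m m' : ℕ}, m ≤ m' → (S K hproj m).D ⊆ (S K hproj m').D := by
  intro m m' h
  induction h with
  | refl => exact subset_rfl
  | step h ih => exact ih.trans (D_sub K hproj _)

lemma self_mem_D (k : ℕ) : k ∈ (S K hproj (k+1)).D := k_mem_Dnew K hproj k _

lemma f_stable
    (hproj' : ∀ n : ℕ, ((fun q : Equiv.Perm ℕ => q.symm n) '' K).Finite)
    (k : ℕ) : ∀ n ∈ (S K hproj k).D, (S K hproj (k+1)).f n = (S K hproj k).f n := by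
  intro n hn
  rcases classify K hproj (D_sub K hproj k hn) with
    ⟨_, h2⟩ | ⟨h1, _⟩ | ⟨h1, hD, _, _⟩ | ⟨h1, _⟩
  · exact h2
  · exact absurd hn (B_disj K hproj hproj' k n h1)
  · exact absurd (h1 ▸ hn) hD
  · exact absurd (h1 ▸ hn) (xpt_spec K hproj k (S K hproj k)).1

lemma f_stable'
    (hproj' : ∀ n : ℕ, ((fun q : Equiv.Perm ℕ => q.symm n) '' K).Finite) :
    ∀ {m m' : ℕ}, m ≤ m' → ∀ n ∈ (S K hproj m).D,
    (S K hproj m').f n = (S K hproj m).f n := by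
  intro m m' h
  induction h with
  | refl => intro n _; rfl
  | @step m'' h ih =>
    intro n hn
    rw [f_stable K hproj hproj' m'' n (D_mono K hproj h hn), ih n hn]

noncomputable def gfun : ℕ → ℕ := fun n => (S K hproj (n+1)).f n

lemma g_eq
    (hproj' : ∀ n : ℕ, ((fun q : Equiv.Perm ℕ => q.symm n) '' K).Finite)
    (m n : ℕ) (hn : n ∈ (S K hproj m).D) : gfun K hproj n = (S K hproj m).f n := by
  rcases le_total m (n+1) with h | h
  · exact f_stable' K hproj hproj' h n hn
  · exact (f_stable' K hproj hproj' h n (self_mem_D K hproj n)).symm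

lemma g_inj
    (hproj' : ∀ n : ℕ, ((fun q : Equiv.Perm ℕ => q.symm n) '' K).Finite) :
    Function.Injective (gfun K hproj) := by
  intro a b h
  have ha : a ∈ (S K hproj (max a b + 1)).D :=
    D_mono K hproj (by omega) (self_mem_D K hproj a)
  have hb : b ∈ (S K hproj (max a b + 1)).D :=
    D_mono K hproj (by omega) (self_mem_D K hproj b)
  rw [g_eq K hproj hproj' _ a ha, g_eq K hproj hproj' _ b hb] at h
  exact invInj K hproj hproj' (max a b + 1) (Finset.mem_coe.mpr ha) (Finset.mem_coe.mpr hb) h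

lemma R_mono
    (hproj' : ∀ n : ℕ, ((fun q : Equiv.Perm ℕ => q.symm n) '' K).Finite)
    (k : ℕ) :
    (S K hproj k).D.image (S K hproj k).f ⊆ (S K hproj (k+1)).D.image (S K hproj (k+1)).f := by
  intro y hy
  obtain ⟨n, hn, rfl⟩ := Finset.mem_image.mp hy
  exact Finset.mem_image.mpr ⟨n, D_sub K hproj k hn, f_stable K hproj hproj' k n hn⟩

lemma rval_mem_next (k : ℕ) :
    rval (S K hproj k) ∈ (S K hproj (k+1)).D.image (S K hproj (k+1)).f := by
  refine Finset.mem_image.mpr ⟨xpt K hproj k (S K hproj k), xpt_mem_Dnew K hproj k _, ?_⟩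
  exact fnew_of_xpt K hproj

lemma rval_eq {k n : ℕ} (hnot : n ∉ (S K hproj k).D.image (S K hproj k).f)
    (hbelow : ∀ j < n, j ∈ (S K hproj k).D.image (S K hproj k).f) : rval (S K hproj k) = n := by
  have h1 : rval (S K hproj k) ≤ n := Nat.sInf_le hnot
  rcases lt_or_eq_of_le h1 with h | h
  · exact absurd (hbelow _ h) (rval_not_mem (S K hproj k))
  · exact h

lemma all_in_range
    (hproj' : ∀ n : ℕ, ((fun q : Equiv.Perm ℕ => q.symm n) '' K).Finite) :
    ∀ n : ℕ, ∃ m, ∀ j ≤ n, j ∈ (S K hproj m).D.image (S K hproj m).f := by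
  intro n
  induction n with
  | zero =>
    by_cases h : 0 ∈ (S K hproj 0).D.image (S K hproj 0).f
    · exact ⟨0, fun j hj => by rw [Nat.le_zero.mp hj]; exact h⟩
    · refine ⟨1, fun j hj => ?_⟩
      rw [Nat.le_zero.mp hj]
      have heq := rval_eq K hproj h (fun j hj => absurd hj (Nat.not_lt_zero j))
      exact heq ▸ rval_mem_next K hproj 0
  | succ n ih =>
    obtain ⟨m, hm⟩ := ih
    by_cases h : n + 1 ∈ (S K hproj m).D.image (S K hproj m).f
    · refine ⟨m, fun j hj => ?_⟩
      rcases Nat.lt_succ_iff_lt_or_eq.mp (Nat.lt_succ_of_le hj) with h' | rfl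
      · exact hm j (Nat.lt_succ_iff.mp h')
      · exact h
    · refine ⟨m + 1, fun j hj => ?_⟩
      rcases Nat.lt_succ_iff_lt_or_eq.mp (Nat.lt_succ_of_le hj) with h' | rfl
      · exact R_mono K hproj hproj' m (hm j (Nat.lt_succ_iff.mp h'))
      · have heq := rval_eq K hproj h (fun i hi => hm i (Nat.lt_succ_iff.mp hi))
        exact heq ▸ rval_mem_next K hproj m

lemma g_surj
    (hproj' : ∀ n : ℕ, ((fun q : Equiv.Perm ℕ => q.symm n) '' K).Finite) :
    Function.Surjective (gfun K hproj) := by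
  intro n
  obtain ⟨m, hm⟩ := all_in_range K hproj hproj' n
  obtain ⟨a, ha, hfa⟩ := Finset.mem_image.mp (hm n le_rfl)
  exact ⟨a, by rw [g_eq K hproj hproj' m a ha]; exact hfa⟩

end ExistsPermCompAux

open ExistsPermCompAux in
/-- Let `K` be a nonempty set of permutations of `ℕ` all of whose coordinate projections and
inverse coordinate projections are finite. Then there is a permutation `p` such that for
every `q ∈ K` the composition `p ∘ q` has an infinite cycle: some point `m` has infinite
orbit under `p ∘ q`. -/
theorem exists_perm_comp_has_infinite_cycle (K : Set (Equiv.Perm ℕ)) (hKne : K.Nonempty)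
    (hproj : ∀ n : ℕ, ((fun q : Equiv.Perm ℕ => q n) '' K).Finite)
    (hproj' : ∀ n : ℕ, ((fun q : Equiv.Perm ℕ => q.symm n) '' K).Finite) :
    ∃ p : Equiv.Perm ℕ, ∀ q ∈ K, ∃ m : ℕ,
      (Set.range fun k : ℕ => ((p * q) ^ k) m).Infinite := by
  classical
  set p : Equiv.Perm ℕ :=
    Equiv.ofBijective (gfun K hproj) ⟨g_inj K hproj hproj', g_surj K hproj hproj'⟩ with hp
  refine ⟨p, fun q hq => ⟨0, ?_⟩⟩
  have orbit : ∀ k, ((p * q) ^ k) 0 ∈ (S K hproj k).A := by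
    intro k
    induction k with
    | zero => simp [S]
    | succ k ih =>
      have h1 : ((p * q) ^ (k+1)) 0 = p (q (((p * q) ^ k) 0)) := by
        rw [pow_succ']
        simp [Equiv.Perm.mul_apply]
      set m0 := ((p * q) ^ k) 0 with hm0
      have hB : q m0 ∈ Bset K hproj (S K hproj k) :=
        Finset.mem_biUnion.mpr ⟨m0, ih, (Set.Finite.mem_toFinset _).mpr ⟨q, hq, rfl⟩⟩
      have hDm : q m0 ∈ (S K hproj (k+1)).D := mem_Dnew_of_B K hproj hB
      have h2 : p (q m0) = vv K hproj k (S K hproj k) (q m0) := by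
        have hg : p (q m0) = gfun K hproj (q m0) := rfl
        rw [hg, g_eq K hproj hproj' (k+1) _ hDm]
        exact fnew_of_B K hproj hB
      rw [h1, h2]
      exact Finset.mem_image_of_mem _ hB
  apply Set.infinite_of_not_bddAbove
  rintro ⟨ub, hub⟩
  have h1 := invLB K hproj hproj' (ub+1) _ (orbit (ub+1))
  have h2 : ((p * q) ^ (ub+1)) 0 ≤ ub := hub (Set.mem_range_self (ub+1))
  omega
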